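/- Let G = (V, E) be a 3-regular finite simple graph with a fixed orientation (v_e⁻, v_e⁺) of each edge e, and consider the associated pricing instance. Then the supremum, over all pricings q, of the profit is attained and equals 20·|V| + 4·|E| + max_{S ⊆ V} |{e ∈ E : exactly one endpoint of e lies in S}|. -/

import Mathlib

/-- A customer with bundle price `x` and budget `B` pays `x` if `x ≤ B` and `0`
otherwise (negative prices are allowed). -/
noncomputable def pay (x B : ℝ) : ℝ := if x ≤ B then x else 0

/-- The profit of the pricing instance associated with an oriented graph with
vertex items `V` (prices `qV`), edge items indexed by `E` (prices `qx`) and one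
extra item `v₀` (price `q0`): for each edge `e` there is one customer with bundle
`{v_e⁻, x_e}` and budget `2`, two customers with bundle `{v_e⁺, x_e}` and budget
`1`, and one customer with bundle `{v_e⁺, x_e}` and budget `3`; for each vertex
`v` there are ten customers with bundle `{v, v₀}` and budget `1` and ten with
budget `2`. -/
noncomputable def graphProfit {V E : Type*} [Fintype V] [Fintype E]
    (vm vp : E → V) (qV : V → ℝ) (qx : E → ℝ) (q0 : ℝ) : ℝ :=
  (∑ e : E, (pay (qV (vm e) + qx e) 2 + 2 * pay (qV (vp e) + qx e) 1 +
      pay (qV (vp e) + qx e) 3)) +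
    ∑ v : V, (10 * pay (qV v + q0) 1 + 10 * pay (qV v + q0) 2)

noncomputable def dft (s : ℝ) : ℝ := 20 - (10 * pay s 1 + 10 * pay s 2)

lemma dft_nonneg (s : ℝ) : 0 ≤ dft s := by
  unfold dft pay; split_ifs <;> linarith

lemma edge_le5 (u w : ℝ) : pay u 2 + 2 * pay w 1 + pay w 3 ≤ 5 := by
  unfold pay; split_ifs <;> linarith

set_option maxHeartbeats 2000000 in
lemma key_ineq (u w s t : ℝ) (A B : Prop) [Decidable A] [Decidable B]
    (hA : A ↔ ((3:ℝ)/2 ≤ s)) (hB : B ↔ ((3:ℝ)/2 ≤ t)) (h : w - u = t - s) :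
    pay u 2 + 2 * pay w 1 + pay w 3 ≤
      4 + (if Xor A B then (1:ℝ) else 0) + (dft s + dft t) / 3 := by
  rcases le_or_gt ((3:ℝ)/2) s with hs | hs <;> rcases le_or_gt ((3:ℝ)/2) t with ht | ht
  · rw [if_neg (fun hx => hx.elim (fun p => p.2 (hB.mpr ht)) (fun p => p.2 (hA.mpr hs)))]
    unfold dft pay; split_ifs <;> linarith
  · rw [if_pos (show Xor A B from Or.inl ⟨hA.mpr hs, fun hb => absurd (hB.mp hb) (not_le.mpr ht)⟩)]
    linarith [edge_le5 u w, dft_nonneg s, dft_nonneg t]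
  · rw [if_pos (show Xor A B from Or.inr ⟨hB.mpr ht, fun ha => absurd (hA.mp ha) (not_le.mpr hs)⟩)]
    linarith [edge_le5 u w, dft_nonneg s, dft_nonneg t]
  · rw [if_neg (fun hx => hx.elim (fun p => absurd (hA.mp p.1) (not_le.mpr hs))
      (fun p => absurd (hB.mp p.1) (not_le.mpr ht)))]
    unfold dft pay; split_ifs <;> linarith

/-- maximum profit = `20|V| + 4|E| + maxcut`.
For a 3-regular finite simple graph `G` with a fixed orientation `(vm e, vp e)`
of each edge, the supremum of the profit over all pricings of the associated
instance is attained and equals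
`20|V| + 4|E| + max_{S ⊆ V} #{e : exactly one endpoint of e lies in S}`. -/
theorem graph_pricing_maxcut
    {V : Type*} [Fintype V] [DecidableEq V]
    (G : SimpleGraph V) [DecidableRel G.Adj] [Fintype G.edgeSet]
    (hreg : G.IsRegularOfDegree 3)
    (vm vp : G.edgeSet → V)
    (horient : ∀ e : G.edgeSet, (e : Sym2 V) = s(vm e, vp e)) :
    IsGreatest
      {x : ℝ | ∃ (qV : V → ℝ) (qx : G.edgeSet → ℝ) (q0 : ℝ),
        x = graphProfit vm vp qV qx q0}
      (20 * (Fintype.card V : ℝ) + 4 * (Fintype.card G.edgeSet : ℝ) +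
        (((Finset.univ : Finset V).powerset.sup (fun S =>
          (Finset.univ.filter
            (fun e : G.edgeSet => Xor (vm e ∈ S) (vp e ∈ S))).card) : ℕ) : ℝ)) := by
  classical
  have hadj : ∀ e : G.edgeSet, G.Adj (vm e) (vp e) := by
    intro e
    have h2 := e.2
    rw [horient e, SimpleGraph.mem_edgeSet] at h2
    exact h2
  have hne : ∀ e : G.edgeSet, vm e ≠ vp e := fun e => (hadj e).ne
  constructor
  · -- membership: an optimal pricing exists
    obtain ⟨S, -, hSe⟩ := Finset.exists_mem_eq_sup (Finset.univ : Finset V).powerset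
      ⟨∅, Finset.empty_mem_powerset _⟩
      (fun S => (Finset.univ.filter
        (fun e : G.edgeSet => Xor (vm e ∈ S) (vp e ∈ S))).card)
    refine ⟨fun v => if v ∈ S then 2 else 1,
      fun e => if vm e ∉ S ∧ vp e ∈ S then 1 else 0, 0, ?_⟩
    unfold graphProfit
    have hv : ∀ v : V,
        10 * pay ((if v ∈ S then (2:ℝ) else 1) + 0) 1 +
          10 * pay ((if v ∈ S then (2:ℝ) else 1) + 0) 2 = 20 := by
      intro v
      by_cases h : v ∈ S <;> norm_num [h, pay]
    have he : ∀ e : G.edgeSet,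
        pay ((if vm e ∈ S then (2:ℝ) else 1) +
            (if vm e ∉ S ∧ vp e ∈ S then 1 else 0)) 2 +
          2 * pay ((if vp e ∈ S then (2:ℝ) else 1) +
            (if vm e ∉ S ∧ vp e ∈ S then 1 else 0)) 1 +
          pay ((if vp e ∈ S then (2:ℝ) else 1) +
            (if vm e ∉ S ∧ vp e ∈ S then 1 else 0)) 3
        = 4 + (if Xor (vm e ∈ S) (vp e ∈ S) then (1:ℝ) else 0) := by
      intro e
      by_cases h1 : vm e ∈ S <;> by_cases h2 : vp e ∈ S <;>
        norm_num [h1, h2, pay, Xor]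
    rw [Finset.sum_congr rfl fun e _ => he e, Finset.sum_congr rfl fun v _ => hv v,
      Finset.sum_add_distrib, Finset.sum_boole, Finset.sum_const, Finset.sum_const]
    rw [hSe]
    simp only [Finset.card_univ, nsmul_eq_mul]
    ring
  · -- upper bound
    rintro x ⟨qV, qx, q0, rfl⟩
    set S : Finset V := Finset.univ.filter (fun v => (3:ℝ)/2 ≤ qV v + q0) with hS
    set cut : ℕ := (Finset.univ.filter
      (fun e : G.edgeSet => Xor (vm e ∈ S) (vp e ∈ S))).card with hcutdef
    have hcut : (cut : ℝ) ≤
        (((Finset.univ : Finset V).powerset.sup (fun S =>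
          (Finset.univ.filter
            (fun e : G.edgeSet => Xor (vm e ∈ S) (vp e ∈ S))).card) : ℕ) : ℝ) := by
      exact_mod_cast Finset.le_sup (f := fun S =>
        (Finset.univ.filter
          (fun e : G.edgeSet => Xor (vm e ∈ S) (vp e ∈ S))).card)
        (Finset.mem_powerset.mpr (Finset.subset_univ S))
    have hdeg : ∀ v : V,
        (Finset.univ.filter fun e : G.edgeSet => v ∈ (e : Sym2 V)).card = 3 := by
      intro v
      rw [← hreg v, ← SimpleGraph.card_incidenceFinset_eq_degree,
        SimpleGraph.incidenceFinset_eq_filter]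
      refine Finset.card_bij (fun e _ => (e : Sym2 V)) ?_ ?_ ?_
      · intro e he
        simp only [Finset.mem_filter, Finset.mem_univ, true_and] at he
        simp only [Finset.mem_filter, SimpleGraph.mem_edgeFinset]
        exact ⟨e.2, he⟩
      · intro a _ b _ hab; exact Subtype.ext hab
      · intro e he
        simp only [Finset.mem_filter, SimpleGraph.mem_edgeFinset] at he
        exact ⟨⟨e, he.1⟩, by simp [he.2], rfl⟩
    set f : V → ℝ := fun v => dft (qV v + q0) with hf
    have step1 : ∀ e : G.edgeSet,
        f (vm e) + f (vp e) = ∑ v : V, if v ∈ (e : Sym2 V) then f v else 0 := by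
      intro e
      have hvv : ∀ v : V, (if v ∈ (e : Sym2 V) then f v else 0)
          = (if v = vm e then f v else 0) + (if v = vp e then f v else 0) := by
        intro v
        rw [horient e]
        by_cases h1 : v = vm e <;> by_cases h2 : v = vp e
        · exact absurd (h1.symm.trans h2) (hne e)
        · simp only [Sym2.mem_iff, h1, h2]
          simp only [true_or, if_true, if_neg h2]
          rw [if_neg (hne e)]; ring
        · simp only [Sym2.mem_iff, h1, h2]
          simp only [or_true, if_true, if_neg h1]
          rw [if_neg (fun h => hne e h.symm)]; ring
        · simp [Sym2.mem_iff, h1, h2]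
      rw [Finset.sum_congr rfl fun v _ => hvv v, Finset.sum_add_distrib,
        Finset.sum_ite_eq' Finset.univ (vm e) f, Finset.sum_ite_eq' Finset.univ (vp e) f]
      simp
    have hsum : ∑ e : G.edgeSet, (f (vm e) + f (vp e)) = ∑ v : V, 3 * f v := by
      rw [Finset.sum_congr rfl fun e _ => step1 e, Finset.sum_comm]
      refine Finset.sum_congr rfl fun v _ => ?_
      rw [Finset.sum_ite, Finset.sum_const, Finset.sum_const_zero, add_zero,
        hdeg v, nsmul_eq_mul]
      norm_num
    have h1 : ∀ e : G.edgeSet,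
        pay (qV (vm e) + qx e) 2 + 2 * pay (qV (vp e) + qx e) 1 +
          pay (qV (vp e) + qx e) 3
        ≤ 4 + (if Xor (vm e ∈ S) (vp e ∈ S) then (1:ℝ) else 0)
          + (f (vm e) + f (vp e)) / 3 := by
      intro e
      refine key_ineq _ _ _ _ _ _ ?_ ?_ (by ring)
      · simp [hS]
      · simp [hS]
    have hv : ∀ v : V,
        10 * pay (qV v + q0) 1 + 10 * pay (qV v + q0) 2 = 20 - f v := by
      intro v; simp only [hf, dft]; ring
    unfold graphProfit
    calc (∑ e : G.edgeSet, (pay (qV (vm e) + qx e) 2 + 2 * pay (qV (vp e) + qx e) 1 +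
            pay (qV (vp e) + qx e) 3)) +
          ∑ v : V, (10 * pay (qV v + q0) 1 + 10 * pay (qV v + q0) 2)
        ≤ (∑ e : G.edgeSet, (4 + (if Xor (vm e ∈ S) (vp e ∈ S) then (1:ℝ) else 0)
            + (f (vm e) + f (vp e)) / 3)) + ∑ v : V, (20 - f v) := by
          refine add_le_add (Finset.sum_le_sum fun e _ => h1 e) ?_
          exact le_of_eq (Finset.sum_congr rfl fun v _ => hv v)
      _ = 20 * (Fintype.card V : ℝ) + 4 * (Fintype.card G.edgeSet : ℝ) + (cut : ℝ) := by
          rw [Finset.sum_add_distrib, Finset.sum_add_distrib, Finset.sum_boole,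
            ← Finset.sum_div, hsum, Finset.sum_sub_distrib, Finset.sum_const,
            Finset.sum_const, ← Finset.mul_sum, Finset.card_univ, Finset.card_univ,
            nsmul_eq_mul, nsmul_eq_mul, ← hcutdef]
          ring
      _ ≤ _ := by linarith
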